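/- arXiv:1404.4819 — 4 statements merged into one kernel-verified Lean document; each statement's English description precedes it below -/
import Mathlib

section
/- Let k be a field of characteristic 0 and let A be a Poisson algebra over k. Then there exists a k-bilinear bracket [·,·] on Ω_{A/k} satisfying [a df, b dg] = ab d{f,g} + a{f,b} dg − b{g,a} df for all a, b, f, g ∈ A (in particular [df, dg] = d{f,g}), and this bracket is alternating, satisfies the Jacobi identity (so Ω_{A/k} is a Lie algebra over k), satisfies the Leibniz rule [ξ, a·ζ] = a·[ξ,ζ] + ρ(ξ)(a)·ζ for all a ∈ A and ξ, ζ ∈ Ω_{A/k}, and the anchor ρ is a homomorphism of Lie algebras: ρ([ξ,ζ]) = ρ(ξ)∘ρ(ζ) − ρ(ζ)∘ρ(ξ). In other words, (A, Ω_{A/k}) is a Lie–Rinehart algebra over k. -/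
set_option linter.unusedSectionVars false
open TensorProduct

section KLRaux

variable {k A : Type} [Field k] [CharZero k] [CommRing A] [Algebra k A]
variable (bracket : A →ₗ[k] A →ₗ[k] A)

noncomputable def betaAux (a b : A) : A →ₗ[k] A →ₗ[k] A ⊗[k] A :=
  LinearMap.mk₂ k
    (fun c d => (a*c) ⊗ₜ[k] (bracket b d) - (bracket a c) ⊗ₜ[k] (b*d))
    (fun c c' d => by
      simp only [mul_add, map_add, LinearMap.add_apply, add_tmul]
      abel)
    (fun s c d => by
      simp only [mul_smul_comm, map_smul, LinearMap.smul_apply, smul_tmul', smul_sub])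
    (fun c d d' => by
      simp only [map_add, mul_add, tmul_add, add_tmul]
      abel)
    (fun s c d => by
      simp only [map_smul, mul_smul_comm, tmul_smul, smul_sub, smul_tmul'])

noncomputable def beta : (A ⊗[k] A) →ₗ[k] (A ⊗[k] A) →ₗ[k] (A ⊗[k] A) :=
  TensorProduct.lift <| LinearMap.mk₂ k
    (fun a b => TensorProduct.lift (betaAux bracket a b))
    (fun a a' b => by
      apply TensorProduct.ext'
      intro c d
      simp only [TensorProduct.lift.tmul, betaAux, LinearMap.mk₂_apply, LinearMap.add_apply,
        add_mul, map_add, add_tmul]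
      abel)
    (fun s a b => by
      apply TensorProduct.ext'
      intro c d
      simp only [TensorProduct.lift.tmul, betaAux, LinearMap.mk₂_apply, LinearMap.smul_apply,
        smul_mul_assoc, map_smul, smul_tmul', smul_sub])
    (fun a b b' => by
      apply TensorProduct.ext'
      intro c d
      simp only [TensorProduct.lift.tmul, betaAux, LinearMap.mk₂_apply, LinearMap.add_apply,
        map_add, add_mul, tmul_add, add_tmul]
      abel)
    (fun s a b => by
      apply TensorProduct.ext'
      intro c d
      simp only [TensorProduct.lift.tmul, betaAux, LinearMap.mk₂_apply, LinearMap.smul_apply,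
        map_smul, smul_mul_assoc, smul_tmul', tmul_smul, smul_sub])

lemma beta_tmul (a b c d : A) :
    beta bracket (a ⊗ₜ[k] b) (c ⊗ₜ[k] d)
      = (a*c) ⊗ₜ[k] (bracket b d) - (bracket a c) ⊗ₜ[k] (b*d) := rfl

lemma tmul_eq (x y : A) :
    (x ⊗ₜ[k] y : A ⊗[k] A)
      = (Algebra.TensorProduct.includeLeft (R := k) (S := k) x)
        * (Algebra.TensorProduct.includeRight (R := k) y) := by
  simp [Algebra.TensorProduct.tmul_mul_tmul]

variable (hskew : ∀ a b : A, bracket a b = - bracket b a)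
variable (leibniz : ∀ a b c : A, bracket a (b * c) = bracket a b * c + b * bracket a c)

include hskew in
lemma beta_skew (x y : A ⊗[k] A) : beta bracket x y = - beta bracket y x := by
  induction x using TensorProduct.induction_on with
  | zero => simp
  | add u v hu hv => simp only [map_add, LinearMap.add_apply, hu, hv]; abel
  | tmul a b =>
    induction y using TensorProduct.induction_on with
    | zero => simp
    | add u v hu hv => simp only [map_add, LinearMap.add_apply, hu, hv]; abel
    | tmul c d =>
      rw [beta_tmul, beta_tmul, hskew b d, hskew a c]
      simp only [tmul_eq, map_mul, map_neg]
      ring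

include leibniz in
lemma beta_mul (x y z : A ⊗[k] A) :
    beta bracket x (y * z) = beta bracket x y * z + y * beta bracket x z := by
  induction x using TensorProduct.induction_on with
  | zero => simp
  | add u v hu hv => simp only [map_add, LinearMap.add_apply, hu, hv]; ring
  | tmul a b =>
    induction y using TensorProduct.induction_on with
    | zero => simp
    | add u v hu hv => simp only [map_add, add_mul, hu, hv]; ring
    | tmul c d =>
      induction z using TensorProduct.induction_on with
      | zero => simp
      | add u v hu hv => simp only [map_add, mul_add, hu, hv]; ring
      | tmul e f =>
        simp only [Algebra.TensorProduct.tmul_mul_tmul, beta_tmul, leibniz, sub_mul, mul_sub,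
          tmul_add, add_tmul, mul_add, add_mul, map_add]
        simp only [tmul_eq, map_mul, map_add]
        ring

section
variable (jacobi : ∀ a b c : A,
      bracket a (bracket b c) = bracket (bracket a b) c + bracket b (bracket a c))

include hskew leibniz in
lemma leib1 (a b c : A) : bracket (a*b) c = a * bracket b c + b * bracket a c := by
  rw [hskew, leibniz, hskew c a, hskew c b]; ring

include hskew leibniz jacobi in
lemma beta_jacobi (x y z : A ⊗[k] A) :
    beta bracket x (beta bracket y z)
      = beta bracket (beta bracket x y) z + beta bracket y (beta bracket x z) := by
  induction x using TensorProduct.induction_on with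
  | zero => simp
  | add u v hu hv => simp only [map_add, LinearMap.add_apply, hu, hv]; abel
  | tmul a b =>
    induction y using TensorProduct.induction_on with
    | zero => simp
    | add u v hu hv => simp only [map_add, LinearMap.add_apply, hu, hv]; abel
    | tmul c d =>
      induction z using TensorProduct.induction_on with
      | zero => simp
      | add u v hu hv => simp only [map_add, LinearMap.add_apply, hu, hv]; abel
      | tmul e f =>
        simp only [beta_tmul, map_sub, LinearMap.sub_apply]
        rw [jacobi b d f, jacobi a c e]
        simp only [beta_tmul, leibniz, leib1 bracket hskew leibniz, map_sub, map_add,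
          LinearMap.sub_apply, LinearMap.add_apply, sub_mul, mul_sub, mul_add, add_mul,
          tmul_add, add_tmul, tmul_sub, sub_tmul]
        rw [hskew d b, hskew c a]
        simp only [tmul_eq, map_mul, map_add, map_sub, map_neg, neg_tmul, tmul_neg,
          mul_neg, neg_mul]
        ring
end

include leibniz in
lemma br_one (a : A) : bracket a 1 = 0 := by
  have h := leibniz a 1 1
  rw [mul_one] at h
  exact (left_eq_add.mp (by rw [one_mul, mul_one] at h; exact h))

include hskew leibniz in
lemma one_br (a : A) : bracket 1 a = 0 := by
  rw [hskew, br_one bracket leibniz, neg_zero]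

include hskew leibniz in
lemma beta_mul_left (x y z : A ⊗[k] A) :
    beta bracket (x * y) z = beta bracket x z * y + x * beta bracket y z := by
  rw [beta_skew bracket hskew (x*y) z, beta_mul bracket leibniz z x y,
    beta_skew bracket hskew x z, beta_skew bracket hskew y z]
  ring

section
variable (ρ : Ω[A⁄k] →ₗ[A] Derivation k A A)
variable (hρ : ∀ f b : A, ρ (KaehlerDifferential.D k A f) b = bracket f b)

include hskew leibniz hρ in
lemma key (x : KaehlerDifferential.ideal k A) (w : A ⊗[k] A) :
    Algebra.TensorProduct.lmul' (S := A) k (beta bracket x.1 w)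
      = ρ (KaehlerDifferential.fromIdeal k A x) (Algebra.TensorProduct.lmul' (S := A) k w) := by
  obtain ⟨v, hv⟩ := x
  have hv0 : v ∈ Submodule.span A
      (Set.range fun s : A => (1:A) ⊗ₜ[k] s - s ⊗ₜ[k] (1:A)) := by
    rw [KaehlerDifferential.submodule_span_range_eq_ideal]; exact hv
  revert hv
  induction hv0 using Submodule.span_induction with
  | mem u hu =>
    obtain ⟨f, rfl⟩ := hu
    intro hv
    have hDf : KaehlerDifferential.fromIdeal k A ⟨(1:A) ⊗ₜ[k] f - f ⊗ₜ[k] (1:A), hv⟩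
        = KaehlerDifferential.D k A f := rfl
    rw [hDf, hρ]
    induction w using TensorProduct.induction_on with
    | zero => simp
    | add u v hu' hv' => simp only [map_add, hu', hv']
    | tmul c d =>
      simp only [map_sub, LinearMap.sub_apply, beta_tmul, one_mul, mul_one,
        br_one bracket leibniz, one_br bracket hskew leibniz, zero_mul, mul_zero,
        TensorProduct.zero_tmul, TensorProduct.tmul_zero, sub_zero, zero_sub,
        neg_tmul, tmul_neg, map_neg, neg_mul, mul_neg,
        Algebra.TensorProduct.lmul'_apply_tmul, map_zero]
      rw [leibniz f c d]
      ring
  | zero =>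
    intro hv
    rw [show (⟨0, hv⟩ : KaehlerDifferential.ideal k A) = 0 from rfl]
    simp
  | add u v hu0 hv0 ihu ihv =>
    intro hv
    have hu' : u ∈ KaehlerDifferential.ideal k A := by
      have h2 := hu0
      rw [KaehlerDifferential.submodule_span_range_eq_ideal k A] at h2
      exact h2
    have hv' : v ∈ KaehlerDifferential.ideal k A := by
      have h2 := hv0
      rw [KaehlerDifferential.submodule_span_range_eq_ideal k A] at h2
      exact h2
    rw [show (⟨u + v, hv⟩ : KaehlerDifferential.ideal k A) = ⟨u, hu'⟩ + ⟨v, hv'⟩ from rfl]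
    simp only [map_add, LinearMap.add_apply, Derivation.add_apply, Submodule.coe_add]
    rw [ihu hu', ihv hv']
  | smul a u hu0 ihu =>
    intro hv
    have hu' : u ∈ KaehlerDifferential.ideal k A := by
      have h2 := hu0
      rw [KaehlerDifferential.submodule_span_range_eq_ideal k A] at h2
      exact h2
    rw [show (⟨a • u, hv⟩ : KaehlerDifferential.ideal k A) = a • ⟨u, hu'⟩ from rfl,
      LinearMap.map_smul_of_tower, map_smul, Derivation.smul_apply]
    have hsd : a • u = (algebraMap A (A ⊗[k] A)) a * u := Algebra.smul_def a u
    rw [Submodule.coe_smul_of_tower, hsd, beta_mul_left bracket hskew leibniz, map_add, map_mul, map_mul]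
    have hu0' : Algebra.TensorProduct.lmul' (S := A) k u = 0 := by
      rwa [← RingHom.mem_ker]
    have halg : Algebra.TensorProduct.lmul' (S := A) k ((algebraMap A (A ⊗[k] A)) a) = a := by
      simp [Algebra.TensorProduct.algebraMap_apply, Algebra.TensorProduct.lmul'_apply_tmul]
    rw [hu0', halg, mul_zero, zero_add, ihu hu', smul_eq_mul]
include hskew leibniz hρ in
lemma keymem (x y : KaehlerDifferential.ideal k A) :
    beta bracket x.1 y.1 ∈ KaehlerDifferential.ideal k A := by
  have h := key bracket hskew leibniz ρ hρ x y.1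
  have hy0 : Algebra.TensorProduct.lmul' (S := A) k y.1 = 0 := by
    exact RingHom.mem_ker.mp y.2
  rw [hy0] at h
  simp only [map_zero] at h
  exact RingHom.mem_ker.mpr h

include hskew leibniz hρ in
lemma keymem2 (x : KaehlerDifferential.ideal k A) {y : A ⊗[k] A}
    (hy : y ∈ (KaehlerDifferential.ideal k A) ^ 2) :
    beta bracket x.1 y ∈ (KaehlerDifferential.ideal k A) ^ 2 := by
  rw [pow_two] at hy ⊢
  refine Submodule.mul_induction_on hy ?_ ?_
  · intro m hm n hn
    rw [beta_mul bracket leibniz]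
    exact add_mem (Submodule.mul_mem_mul (keymem bracket hskew leibniz ρ hρ x ⟨m, hm⟩) hn)
      (Submodule.mul_mem_mul hm (keymem bracket hskew leibniz ρ hρ x ⟨n, hn⟩))
  · intro u v hu hv
    rw [map_add]
    exact add_mem hu hv

end

noncomputable def descend {M : Type} [AddCommGroup M] [Module k M]
    (f : (KaehlerDifferential.ideal k A) →ₗ[k] M)
    (hf : ∀ y ∈ ((KaehlerDifferential.ideal k A •
        (⊤ : Submodule (A ⊗[k] A) (KaehlerDifferential.ideal k A)))).restrictScalars k,
      f y = 0) :
    Ω[A⁄k] →ₗ[k] M :=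
  (Submodule.liftQ _ f (fun y hy => hf y hy)).comp
    ((Submodule.Quotient.restrictScalarsEquiv k
      (KaehlerDifferential.ideal k A •
        (⊤ : Submodule (A ⊗[k] A) (KaehlerDifferential.ideal k A)))).symm.toLinearMap
      : Ω[A⁄k] →ₗ[k] _)

lemma descend_fromIdeal {M : Type} [AddCommGroup M] [Module k M]
    (f : (KaehlerDifferential.ideal k A) →ₗ[k] M) (hf) (x : KaehlerDifferential.ideal k A) :
    descend f hf (KaehlerDifferential.fromIdeal k A x) = f x := rfl

noncomputable def toOmega (z : A ⊗[k] A) (hz : z ∈ KaehlerDifferential.ideal k A) : Ω[A⁄k] :=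
  KaehlerDifferential.fromIdeal k A ⟨z, hz⟩

lemma toOmega_congr {z w : A ⊗[k] A} {hz hw} (h : z = w) :
    toOmega z hz = toOmega w hw := by subst h; rfl

lemma toOmega_add {z w : A ⊗[k] A} (hz : z ∈ KaehlerDifferential.ideal k A)
    (hw : w ∈ KaehlerDifferential.ideal k A) {hzw} :
    toOmega (z + w) hzw = toOmega z hz + toOmega w hw := by
  unfold toOmega
  rw [show (⟨z + w, hzw⟩ : KaehlerDifferential.ideal k A) = ⟨z, hz⟩ + ⟨w, hw⟩ from rfl,
    map_add]

lemma toOmega_smulk (c : k) {z : A ⊗[k] A} (hz : z ∈ KaehlerDifferential.ideal k A) {hz2} :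
    toOmega (c • z) hz2 = c • toOmega z hz := by
  unfold toOmega
  rw [show (⟨c • z, hz2⟩ : KaehlerDifferential.ideal k A) = c • ⟨z, hz⟩ from rfl]
  exact LinearMap.map_smul_of_tower _ _ _

lemma toOmega_smulA (a : A) {z : A ⊗[k] A} (hz : z ∈ KaehlerDifferential.ideal k A) {hz2} :
    toOmega (a • z) hz2 = a • toOmega z hz := by
  unfold toOmega
  rw [show (⟨a • z, hz2⟩ : KaehlerDifferential.ideal k A) = a • ⟨z, hz⟩ from rfl]
  exact LinearMap.map_smul_of_tower _ _ _

lemma toOmega_eq_zero {z : A ⊗[k] A} {hz} (h : z ∈ (KaehlerDifferential.ideal k A) ^ 2) :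
    toOmega z hz = 0 :=
  (Ideal.toCotangent_eq_zero _ _).mpr h

lemma fromIdeal_surj (ζ : Ω[A⁄k]) :
    ∃ y : KaehlerDifferential.ideal k A, KaehlerDifferential.fromIdeal k A y = ζ :=
  Ideal.toCotangent_surjective _ ζ

lemma memNsq (y : KaehlerDifferential.ideal k A)
    (hy : y ∈ ((KaehlerDifferential.ideal k A •
        (⊤ : Submodule (A ⊗[k] A) (KaehlerDifferential.ideal k A)))).restrictScalars k) :
    (y : A ⊗[k] A) ∈ (KaehlerDifferential.ideal k A) ^ 2 := by
  have h0 : (KaehlerDifferential.ideal k A).toCotangent y = 0 :=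
    (Submodule.Quotient.mk_eq_zero _).mpr hy
  exact (Ideal.toCotangent_eq_zero _ _).mp h0

section
variable (ρ : Ω[A⁄k] →ₗ[A] Derivation k A A)
variable (hρ : ∀ f b : A, ρ (KaehlerDifferential.D k A f) b = bracket f b)

variable [Nonempty (A ⊗[k] A)]

include hskew leibniz hρ in
lemma keymem' (x y : KaehlerDifferential.ideal k A) :
    beta bracket x.1 y.1 ∈ KaehlerDifferential.ideal k A :=
  keymem bracket hskew leibniz ρ hρ x y

noncomputable def brSub
    (hskew : ∀ a b : A, bracket a b = - bracket b a)
    (leibniz : ∀ a b c : A, bracket a (b * c) = bracket a b * c + b * bracket a c)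
    (ρ : Ω[A⁄k] →ₗ[A] Derivation k A A)
    (hρ : ∀ f b : A, ρ (KaehlerDifferential.D k A f) b = bracket f b) :
    (KaehlerDifferential.ideal k A) →ₗ[k] (KaehlerDifferential.ideal k A) →ₗ[k] Ω[A⁄k] :=
  LinearMap.mk₂ k
    (fun x y => toOmega (beta bracket x.1 y.1) (keymem bracket hskew leibniz ρ hρ x y))
    (fun x x' y => by
      rw [toOmega_congr (show beta bracket (↑(x + x')) y.1
          = beta bracket x.1 y.1 + beta bracket x'.1 y.1 by
        rw [Submodule.coe_add, map_add, LinearMap.add_apply]),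
        toOmega_add (keymem bracket hskew leibniz ρ hρ x y)
          (keymem bracket hskew leibniz ρ hρ x' y)]
      exact add_mem (keymem bracket hskew leibniz ρ hρ x y)
        (keymem bracket hskew leibniz ρ hρ x' y))
    (fun c x y => by
      rw [toOmega_congr (show beta bracket (↑(c • x)) y.1 = c • beta bracket x.1 y.1 by
        rw [Submodule.coe_smul_of_tower, map_smul, LinearMap.smul_apply]),
        toOmega_smulk c (keymem bracket hskew leibniz ρ hρ x y)]
      exact Submodule.smul_of_tower_mem _ c (keymem bracket hskew leibniz ρ hρ x y))
    (fun x y y' => by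
      rw [toOmega_congr (show beta bracket x.1 (↑(y + y'))
          = beta bracket x.1 y.1 + beta bracket x.1 y'.1 by
        rw [Submodule.coe_add, map_add]),
        toOmega_add (keymem bracket hskew leibniz ρ hρ x y)
          (keymem bracket hskew leibniz ρ hρ x y')]
      exact add_mem (keymem bracket hskew leibniz ρ hρ x y)
        (keymem bracket hskew leibniz ρ hρ x y'))
    (fun c x y => by
      rw [toOmega_congr (show beta bracket x.1 (↑(c • y)) = c • beta bracket x.1 y.1 by
        rw [Submodule.coe_smul_of_tower, map_smul]),
        toOmega_smulk c (keymem bracket hskew leibniz ρ hρ x y)]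
      exact Submodule.smul_of_tower_mem _ c (keymem bracket hskew leibniz ρ hρ x y))
end

section
variable (hskew' : ∀ a b : A, bracket a b = - bracket b a)
variable (leibniz' : ∀ a b c : A, bracket a (b * c) = bracket a b * c + b * bracket a c)
variable (ρ : Ω[A⁄k] →ₗ[A] Derivation k A A)
variable (hρ : ∀ f b : A, ρ (KaehlerDifferential.D k A f) b = bracket f b)

noncomputable def brHalf (x : KaehlerDifferential.ideal k A) : Ω[A⁄k] →ₗ[k] Ω[A⁄k] :=
  descend (brSub bracket hskew' leibniz' ρ hρ x) (fun y hy => by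
    have h2 := memNsq y hy
    exact toOmega_eq_zero (keymem2 bracket hskew' leibniz' ρ hρ x h2))

lemma brHalf_apply (x y : KaehlerDifferential.ideal k A) :
    brHalf bracket hskew' leibniz' ρ hρ x (KaehlerDifferential.fromIdeal k A y)
      = toOmega (beta bracket x.1 y.1) (keymem bracket hskew' leibniz' ρ hρ x y) := rfl

set_option maxHeartbeats 2000000 in
noncomputable def brOmega : Ω[A⁄k] →ₗ[k] Ω[A⁄k] →ₗ[k] Ω[A⁄k] :=
  descend
    { toFun := fun x => brHalf bracket hskew' leibniz' ρ hρ x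
      map_add' := fun x x' => by
        apply LinearMap.ext; intro ζ
        obtain ⟨y, rfl⟩ := fromIdeal_surj ζ
        rw [LinearMap.add_apply, brHalf_apply, brHalf_apply, brHalf_apply,
          toOmega_congr (show beta bracket (↑(x + x')) y.1
              = beta bracket x.1 y.1 + beta bracket x'.1 y.1 by
            rw [Submodule.coe_add, map_add, LinearMap.add_apply]),
          toOmega_add (keymem bracket hskew' leibniz' ρ hρ x y)
            (keymem bracket hskew' leibniz' ρ hρ x' y)]
        exact add_mem (keymem bracket hskew' leibniz' ρ hρ x y)
          (keymem bracket hskew' leibniz' ρ hρ x' y)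
      map_smul' := fun c x => by
        apply LinearMap.ext; intro ζ
        obtain ⟨y, rfl⟩ := fromIdeal_surj ζ
        rw [RingHom.id_apply, LinearMap.smul_apply, brHalf_apply, brHalf_apply,
          toOmega_congr (show beta bracket (↑(c • x)) y.1 = c • beta bracket x.1 y.1 by
            rw [Submodule.coe_smul_of_tower, map_smul, LinearMap.smul_apply]),
          toOmega_smulk c (keymem bracket hskew' leibniz' ρ hρ x y)]
        exact Submodule.smul_of_tower_mem _ c (keymem bracket hskew' leibniz' ρ hρ x y) }
    (fun x hx => by
      apply LinearMap.ext; intro ζ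
      obtain ⟨y, rfl⟩ := fromIdeal_surj ζ
      have hx2 : (x : A ⊗[k] A) ∈ (KaehlerDifferential.ideal k A) ^ 2 := memNsq x hx
      have hmem : beta bracket x.1 y.1 ∈ (KaehlerDifferential.ideal k A) ^ 2 := by
        rw [beta_skew bracket hskew' x.1 y.1]
        exact neg_mem (keymem2 bracket hskew' leibniz' ρ hρ y hx2)
      show brHalf bracket hskew' leibniz' ρ hρ x (KaehlerDifferential.fromIdeal k A y)
        = (0 : Ω[A⁄k] →ₗ[k] Ω[A⁄k]) (KaehlerDifferential.fromIdeal k A y)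
      rw [brHalf_apply, LinearMap.zero_apply]
      exact toOmega_eq_zero hmem)

set_option maxHeartbeats 1000000 in
lemma brOmega_apply (x y : KaehlerDifferential.ideal k A) :
    brOmega bracket hskew' leibniz' ρ hρ
        (KaehlerDifferential.fromIdeal k A x) (KaehlerDifferential.fromIdeal k A y)
      = toOmega (beta bracket x.1 y.1) (keymem bracket hskew' leibniz' ρ hρ x y) := rfl

end

lemma toOmega_def (z : A ⊗[k] A) (hz : z ∈ KaehlerDifferential.ideal k A) :
    toOmega z hz = KaehlerDifferential.fromIdeal k A ⟨z, hz⟩ := rfl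

lemma lmul'_algebraMap (a : A) :
    Algebra.TensorProduct.lmul' (S := A) k (algebraMap A (A ⊗[k] A) a) = a := by
  simp [Algebra.TensorProduct.algebraMap_apply, Algebra.TensorProduct.lmul'_apply_tmul]

lemma toOmega_mul (r : A ⊗[k] A) (y : KaehlerDifferential.ideal k A) {h} :
    toOmega (r * y.1) h
      = (Algebra.TensorProduct.lmul' (S := A) k r) • toOmega y.1 y.2 := by
  set a := Algebra.TensorProduct.lmul' (S := A) k r with ha
  have hmem : r - algebraMap A (A ⊗[k] A) a ∈ KaehlerDifferential.ideal k A := by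
    rw [RingHom.mem_ker, map_sub, lmul'_algebraMap, ← ha, sub_self]
  have hmem2 : algebraMap A (A ⊗[k] A) a * y.1 ∈ KaehlerDifferential.ideal k A :=
    Ideal.mul_mem_left _ _ y.2
  have h1 : toOmega (r * y.1) h = toOmega (algebraMap A (A ⊗[k] A) a * y.1) hmem2 := by
    refine (Ideal.toCotangent_eq _).mpr ?_
    show (r * y.1 - algebraMap A (A ⊗[k] A) a * y.1 : A ⊗[k] A) ∈ _
    rw [← sub_mul, pow_two]
    exact Submodule.mul_mem_mul hmem y.2
  rw [h1, toOmega_congr ((Algebra.smul_def a (y.1 : A ⊗[k] A)).symm), toOmega_smulA a y.2]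
  exact Submodule.smul_of_tower_mem _ a y.2

end KLRaux

/-- For a Poisson algebra `A` over a field `k` of characteristic 0, the Kähler
differentials `Ω[A⁄k]` carry a `k`-bilinear bracket satisfying
`[a df, b dg] = ab d{f,g} + a{f,b} dg − b{g,a} df`, which is alternating, satisfies the Jacobi
identity, the Leibniz rule `[ξ, a·ζ] = a·[ξ,ζ] + ρ(ξ)(a)·ζ`, and for which the anchor `ρ` is a
Lie algebra homomorphism; i.e. `(A, Ω[A⁄k])` is a Lie–Rinehart algebra over `k`. -/
theorem kaehler_lie_rinehart
    (k A : Type) [Field k] [CharZero k] [CommRing A] [Algebra k A]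
    (bracket : A →ₗ[k] A →ₗ[k] A)
    (alt : ∀ a : A, bracket a a = 0)
    (jacobi : ∀ a b c : A,
      bracket a (bracket b c) = bracket (bracket a b) c + bracket b (bracket a c))
    (leibniz : ∀ a b c : A, bracket a (b * c) = bracket a b * c + b * bracket a c)
    (ρ : Ω[A⁄k] →ₗ[A] Derivation k A A)
    (hρ : ∀ f b : A, ρ (KaehlerDifferential.D k A f) b = bracket f b) :
    ∃ br : Ω[A⁄k] →ₗ[k] Ω[A⁄k] →ₗ[k] Ω[A⁄k],
      (∀ a b f g : A,
        br (a • KaehlerDifferential.D k A f) (b • KaehlerDifferential.D k A g) =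
          (a * b) • KaehlerDifferential.D k A (bracket f g)
            + (a * bracket f b) • KaehlerDifferential.D k A g
            - (b * bracket g a) • KaehlerDifferential.D k A f) ∧
      (∀ ξ : Ω[A⁄k], br ξ ξ = 0) ∧
      (∀ ξ ζ η : Ω[A⁄k], br ξ (br ζ η) = br (br ξ ζ) η + br ζ (br ξ η)) ∧
      (∀ (a : A) (ξ ζ : Ω[A⁄k]), br ξ (a • ζ) = a • br ξ ζ + (ρ ξ) a • ζ) ∧
      (∀ (ξ ζ : Ω[A⁄k]) (a : A), ρ (br ξ ζ) a = ρ ξ (ρ ζ a) - ρ ζ (ρ ξ a)) := by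
  have hskew : ∀ a b : A, bracket a b = - bracket b a := by
    intro a b
    have h := alt (a + b)
    simp only [map_add, LinearMap.add_apply, alt, zero_add, add_zero] at h
    exact eq_neg_of_add_eq_zero_right h
  set br := brOmega bracket hskew leibniz ρ hρ with hbr
  have two_ne : (2:k) ≠ 0 := two_ne_zero
  -- alternating
  have halt : ∀ ξ : Ω[A⁄k], br ξ ξ = 0 := by
    intro ξ
    obtain ⟨x, rfl⟩ := fromIdeal_surj ξ
    rw [hbr, brOmega_apply]
    have h0 : beta bracket x.1 x.1 = 0 := by
      have h := beta_skew bracket hskew x.1 x.1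
      have h2 : (2:k) • beta bracket x.1 x.1 = 0 := by
        rw [two_smul]
        nth_rewrite 1 [h]
        exact neg_add_cancel _
      rcases smul_eq_zero.mp h2 with h3 | h3
      · exact absurd h3 two_ne
      · exact h3
    rw [toOmega_congr (hw := zero_mem _) h0]
    exact toOmega_eq_zero (zero_mem _)
  -- skew-symmetry on Omega
  have hsk : ∀ ξ ζ : Ω[A⁄k], br ξ ζ = - br ζ ξ := by
    intro ξ ζ
    have h := halt (ξ + ζ)
    simp only [map_add, LinearMap.add_apply, halt ξ, halt ζ, zero_add, add_zero] at h
    exact eq_neg_of_add_eq_zero_right h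
  -- jacobi on Omega
  have hjac : ∀ ξ ζ η : Ω[A⁄k], br ξ (br ζ η) = br (br ξ ζ) η + br ζ (br ξ η) := by
    intro ξ ζ η
    obtain ⟨x, rfl⟩ := fromIdeal_surj ξ
    obtain ⟨y, rfl⟩ := fromIdeal_surj ζ
    obtain ⟨z, rfl⟩ := fromIdeal_surj η
    rw [hbr]
    simp only [brOmega_apply, toOmega_def, brOmega_apply]
    rw [← map_add]
    exact congrArg _ (Subtype.ext
      (beta_jacobi bracket hskew leibniz jacobi x.1 y.1 z.1))
  -- Leibniz rule on Omega
  have hleib : ∀ (a : A) (ξ ζ : Ω[A⁄k]), br ξ (a • ζ) = a • br ξ ζ + (ρ ξ) a • ζ := by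
    intro a ξ ζ
    obtain ⟨x, rfl⟩ := fromIdeal_surj ξ
    obtain ⟨y, rfl⟩ := fromIdeal_surj ζ
    rw [hbr, ← LinearMap.map_smul_of_tower, brOmega_apply, brOmega_apply]
    have hsplit : beta bracket x.1 ((a • y : KaehlerDifferential.ideal k A) : A ⊗[k] A)
        = beta bracket x.1 (algebraMap A (A ⊗[k] A) a) * y.1
          + algebraMap A (A ⊗[k] A) a * beta bracket x.1 y.1 := by
      rw [Submodule.coe_smul_of_tower, Algebra.smul_def, beta_mul bracket leibniz]
    have hm1 : beta bracket x.1 (algebraMap A (A ⊗[k] A) a) * y.1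
        ∈ KaehlerDifferential.ideal k A := Ideal.mul_mem_left _ _ y.2
    have hm2 : algebraMap A (A ⊗[k] A) a * beta bracket x.1 y.1
        ∈ KaehlerDifferential.ideal k A :=
      Ideal.mul_mem_left _ _ (keymem bracket hskew leibniz ρ hρ x y)
    rw [toOmega_congr hsplit, toOmega_add hm1 hm2]
    · have hterm1 : toOmega (beta bracket x.1 (algebraMap A (A ⊗[k] A) a) * y.1) hm1
          = (ρ (KaehlerDifferential.fromIdeal k A x)) a • toOmega y.1 y.2 := by
        rw [toOmega_mul]
        congr 1
        rw [key bracket hskew leibniz ρ hρ x (algebraMap A (A ⊗[k] A) a), lmul'_algebraMap]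
      have hterm2 : toOmega (algebraMap A (A ⊗[k] A) a * beta bracket x.1 y.1) hm2
          = a • toOmega (beta bracket x.1 y.1) (keymem bracket hskew leibniz ρ hρ x y) := by
        rw [toOmega_congr ((Algebra.smul_def a (beta bracket x.1 y.1)).symm),
          toOmega_smulA a (keymem bracket hskew leibniz ρ hρ x y)]
        exact Submodule.smul_of_tower_mem _ a (keymem bracket hskew leibniz ρ hρ x y)
      rw [hterm1, hterm2]
      rw [show toOmega y.1 y.2 = KaehlerDifferential.fromIdeal k A y from by
        rw [toOmega_def]]
      exact add_comm _ _
    · exact add_mem hm1 hm2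
  -- anchor is a Lie algebra morphism
  have hanch : ∀ (ξ ζ : Ω[A⁄k]) (a : A), ρ (br ξ ζ) a = ρ ξ (ρ ζ a) - ρ ζ (ρ ξ a) := by
    intro ξ ζ a
    obtain ⟨x, rfl⟩ := fromIdeal_surj ξ
    obtain ⟨y, rfl⟩ := fromIdeal_surj ζ
    rw [hbr, brOmega_apply, toOmega_def]
    have hw : Algebra.TensorProduct.lmul' (S := A) k ((1:A) ⊗ₜ[k] a) = a := by
      rw [Algebra.TensorProduct.lmul'_apply_tmul, one_mul]
    have h1 := key bracket hskew leibniz ρ hρ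
      ⟨beta bracket x.1 y.1, keymem bracket hskew leibniz ρ hρ x y⟩ ((1:A) ⊗ₜ[k] a)
    rw [hw] at h1
    rw [← h1]
    have h2 := beta_jacobi bracket hskew leibniz jacobi x.1 y.1 ((1:A) ⊗ₜ[k] a)
    have h3 : beta bracket (beta bracket x.1 y.1) ((1:A) ⊗ₜ[k] a)
        = beta bracket x.1 (beta bracket y.1 ((1:A) ⊗ₜ[k] a))
          - beta bracket y.1 (beta bracket x.1 ((1:A) ⊗ₜ[k] a)) := by
      rw [h2]; ring
    rw [h3, map_sub]
    rw [key bracket hskew leibniz ρ hρ x (beta bracket y.1 ((1:A) ⊗ₜ[k] a)),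
      key bracket hskew leibniz ρ hρ y (beta bracket x.1 ((1:A) ⊗ₜ[k] a)),
      key bracket hskew leibniz ρ hρ x ((1:A) ⊗ₜ[k] a),
      key bracket hskew leibniz ρ hρ y ((1:A) ⊗ₜ[k] a), hw]
  -- bracket of exact forms
  have hbrD : ∀ f g : A, br (KaehlerDifferential.D k A f) (KaehlerDifferential.D k A g)
      = KaehlerDifferential.D k A (bracket f g) := by
    intro f g
    rw [show KaehlerDifferential.D k A f = KaehlerDifferential.fromIdeal k A
        ⟨(1:A) ⊗ₜ[k] f - f ⊗ₜ[k] (1:A),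
          KaehlerDifferential.one_smul_sub_smul_one_mem_ideal k f⟩ from rfl,
      show KaehlerDifferential.D k A g = KaehlerDifferential.fromIdeal k A
        ⟨(1:A) ⊗ₜ[k] g - g ⊗ₜ[k] (1:A),
          KaehlerDifferential.one_smul_sub_smul_one_mem_ideal k g⟩ from rfl,
      hbr, brOmega_apply,
      show KaehlerDifferential.D k A (bracket f g) = KaehlerDifferential.fromIdeal k A
        ⟨(1:A) ⊗ₜ[k] (bracket f g) - (bracket f g) ⊗ₜ[k] (1:A),
          KaehlerDifferential.one_smul_sub_smul_one_mem_ideal k (bracket f g)⟩ from rfl,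
      ← toOmega_def]
    refine toOmega_congr ?_
    simp only [map_sub, LinearMap.sub_apply, beta_tmul, br_one bracket leibniz,
      one_br bracket hskew leibniz, mul_one, one_mul, TensorProduct.tmul_zero,
      TensorProduct.zero_tmul, sub_zero, zero_sub, neg_neg, sub_self, neg_zero]
  -- main formula
  have hmain : ∀ a b f g : A,
      br (a • KaehlerDifferential.D k A f) (b • KaehlerDifferential.D k A g) =
        (a * b) • KaehlerDifferential.D k A (bracket f g)
          + (a * bracket f b) • KaehlerDifferential.D k A g
          - (b * bracket g a) • KaehlerDifferential.D k A f := by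
    intro a b f g
    rw [hsk, hleib a _ (KaehlerDifferential.D k A f), hsk (b • KaehlerDifferential.D k A g),
      hleib b _ (KaehlerDifferential.D k A g), hbrD, map_smul, Derivation.smul_apply]
    rw [hρ f b, hρ g a]
    simp only [smul_eq_mul]
    module
  exact ⟨br, hmain, halt, hjac, hleib, hanch⟩
end

section
/- Let k be a field of characteristic 0 and let A be a Poisson algebra over k whose module of Kähler differentials Ω_{A/k} is free over A with basis (dx_1, …, dx_ℓ). Then the trace map tr : A → A, tr(y) = Σ_{i=1}^ℓ c_i(d{y, x_i}), is a k-linear derivation of A, i.e. tr is k-linear and tr(yz) = y·tr(z) + z·tr(y) for all y, z ∈ A. -/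
/-- Let `A` be a Poisson algebra over a field `k` of characteristic 0 whose Kähler
differentials are free with basis `(dx_1, …, dx_ℓ)`.  Then the trace map
`tr(y) = Σ_i c_i(d{y, x_i})` is a `k`-linear derivation of `A`. -/
theorem trace_is_derivation
    (k A : Type) [Field k] [CharZero k] [CommRing A] [Algebra k A]
    (bracket : A →ₗ[k] A →ₗ[k] A)
    (alt : ∀ a : A, bracket a a = 0)
    (jacobi : ∀ a b c : A,
      bracket a (bracket b c) = bracket (bracket a b) c + bracket b (bracket a c))
    (leibniz : ∀ a b c : A, bracket a (b * c) = bracket a b * c + b * bracket a c)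
    (ℓ : ℕ) (x : Fin ℓ → A) (b : Module.Basis (Fin ℓ) A (Ω[A⁄k]))
    (hb : ∀ i, b i = KaehlerDifferential.D k A (x i)) :
    ∃ D : Derivation k A A,
      ∀ y : A, D y = ∑ i, b.repr (KaehlerDifferential.D k A (bracket y (x i))) i := by
  have antisym : ∀ a c : A, bracket a c = - bracket c a := by
    intro a c
    have h := alt (a + c)
    simp [map_add, alt] at h
    linear_combination h
  have h1 : ∀ y : A, bracket y 1 = 0 := by
    intro y
    have h := leibniz y 1 1
    simp at h
    exact h
  let Dy : A → Derivation k A A := fun y =>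
    { toLinearMap := bracket y
      map_one_eq_zero' := h1 y
      leibniz' := fun a c => by
        simp only [LinearMap.coe_mk, smul_eq_mul]
        rw [leibniz y a c]; ring }
  have key : ∀ y z : A, bracket y z
      = ∑ i, b.repr (KaehlerDifferential.D k A z) i * bracket y (x i) := by
    intro y z
    calc bracket y z
        = (Dy y).liftKaehlerDifferential (KaehlerDifferential.D k A z) := by
          rw [Derivation.liftKaehlerDifferential_comp_D]; rfl
      _ = (Dy y).liftKaehlerDifferential
            (∑ i, b.repr (KaehlerDifferential.D k A z) i • b i) := by rw [b.sum_repr]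
      _ = ∑ i, b.repr (KaehlerDifferential.D k A z) i * bracket y (x i) := by
          rw [map_sum]
          refine Finset.sum_congr rfl fun i _ => ?_
          rw [map_smul, hb i, Derivation.liftKaehlerDifferential_comp_D, smul_eq_mul]; rfl
  have cross : ∀ y z : A, ∑ i, bracket y (x i) * b.repr (KaehlerDifferential.D k A z) i
      = bracket y z := by
    intro y z
    rw [key y z]
    exact Finset.sum_congr rfl fun i _ => mul_comm _ _
  have expand : ∀ (y z : A) (i : Fin ℓ),
      bracket (y * z) (x i) = z * bracket y (x i) + y * bracket z (x i) := by
    intro y z i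
    rw [antisym (y*z) (x i), leibniz (x i) y z, antisym y (x i), antisym z (x i)]; ring
  have hsm : ∀ (c : k) (y : A) (i : Fin ℓ),
      b.repr (KaehlerDifferential.D k A (bracket (c • y) (x i))) i
        = c • b.repr (KaehlerDifferential.D k A (bracket y (x i))) i := by
    intro c y i
    have h2 : bracket (c • y) (x i) = c • bracket y (x i) := by
      rw [LinearMap.map_smul]; rfl
    rw [h2, Derivation.map_smul, ← algebraMap_smul A c, map_smul, Finsupp.smul_apply,
      algebraMap_smul]
  refine ⟨{ toFun := fun y => ∑ i, b.repr (KaehlerDifferential.D k A (bracket y (x i))) i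
            map_add' := ?_
            map_smul' := ?_
            map_one_eq_zero' := ?_
            leibniz' := ?_ }, fun y => rfl⟩
  · intro y z
    simp [map_add, Finset.sum_add_distrib]
  · intro c y
    simp only [RingHom.id_apply]
    rw [Finset.smul_sum]
    exact Finset.sum_congr rfl fun i _ => hsm c y i
  · have h0 : ∀ i, bracket (1:A) (x i) = 0 := by
      intro i; rw [antisym, h1, neg_zero]
    simp [h0]
  · intro y z
    simp only [LinearMap.coe_mk, AddHom.coe_mk, smul_eq_mul]
    have step : ∀ i, b.repr (KaehlerDifferential.D k A (bracket (y * z) (x i))) i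
        = z * b.repr (KaehlerDifferential.D k A (bracket y (x i))) i
          + bracket y (x i) * b.repr (KaehlerDifferential.D k A z) i
          + (y * b.repr (KaehlerDifferential.D k A (bracket z (x i))) i
          + bracket z (x i) * b.repr (KaehlerDifferential.D k A y) i) := by
      intro i
      rw [expand y z i]
      simp only [map_add, Derivation.leibniz, Finsupp.add_apply, map_smul,
        Finsupp.smul_apply, smul_eq_mul]
    calc ∑ i, b.repr (KaehlerDifferential.D k A (bracket (y * z) (x i))) i
        = ∑ i, (z * b.repr (KaehlerDifferential.D k A (bracket y (x i))) i
          + bracket y (x i) * b.repr (KaehlerDifferential.D k A z) i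
          + (y * b.repr (KaehlerDifferential.D k A (bracket z (x i))) i
          + bracket z (x i) * b.repr (KaehlerDifferential.D k A y) i)) :=
          Finset.sum_congr rfl fun i _ => step i
      _ = z * (∑ i, b.repr (KaehlerDifferential.D k A (bracket y (x i))) i)
          + (∑ i, bracket y (x i) * b.repr (KaehlerDifferential.D k A z) i)
          + (y * (∑ i, b.repr (KaehlerDifferential.D k A (bracket z (x i))) i)
          + (∑ i, bracket z (x i) * b.repr (KaehlerDifferential.D k A y) i)) := by
          rw [Finset.sum_add_distrib, Finset.sum_add_distrib, Finset.sum_add_distrib,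
            ← Finset.mul_sum, ← Finset.mul_sum]
      _ = z * (∑ i, b.repr (KaehlerDifferential.D k A (bracket y (x i))) i)
          + bracket y z
          + (y * (∑ i, b.repr (KaehlerDifferential.D k A (bracket z (x i))) i)
          + bracket z y) := by rw [cross y z, cross z y]
      _ = y * (∑ i, b.repr (KaehlerDifferential.D k A (bracket z (x i))) i)
          + z * (∑ i, b.repr (KaehlerDifferential.D k A (bracket y (x i))) i) := by
          rw [antisym z y]; ring
end

section
/- Let k be a field of characteristic 0 and let A be a Poisson algebra over k whose module of Kähler differentials Ω_{A/k} is free over A with basis (dx_1, …, dx_ℓ). Define a k-bilinear operation {·,·}_ω : A × A → A by {m, a}_ω = −{a, m} + m·tr(a). Then {·,·}_ω makes A into a right Poisson module over A; explicitly, for all m, a, b ∈ A: (i) {m, ab}_ω = a·{m, b}_ω + b·{m, a}_ω; (ii) {a·m, b}_ω = a·{m, b}_ω + m·{a, b}; (iii) {{m, a}_ω, b}_ω − {{m, b}_ω, a}_ω = {m, {a, b}}_ω. -/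
set_option linter.unusedSectionVars false

section Aux
variable {k A : Type} [Field k] [CharZero k] [CommRing A] [Algebra k A]

/-- The Poisson bracket `{a, ·}` as a `k`-derivation. -/
def pDer (bracket : A →ₗ[k] A →ₗ[k] A)
    (leibniz : ∀ a b c : A, bracket a (b * c) = bracket a b * c + b * bracket a c)
    (a : A) : Derivation k A A where
  toLinearMap := bracket a
  map_one_eq_zero' := by
    have h := leibniz a 1 1
    simp only [one_mul, mul_one] at h
    exact (left_eq_add.mp h)
  leibniz' b c := by
    simp only [smul_eq_mul, LinearMap.coe_mk, AddHom.coe_mk]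
    rw [leibniz a b c]; ring

@[simp] lemma pDer_apply (bracket : A →ₗ[k] A →ₗ[k] A)
    (leibniz : ∀ a b c : A, bracket a (b * c) = bracket a b * c + b * bracket a c)
    (a b : A) : pDer bracket leibniz a b = bracket a b := rfl

/-- coordinate derivation -/
noncomputable def coordDer {ℓ : ℕ} (bas : Module.Basis (Fin ℓ) A (Ω[A⁄k])) (i : Fin ℓ) :
    Derivation k A A :=
  (bas.coord i).compDer (KaehlerDifferential.D k A)

@[simp] lemma coordDer_apply {ℓ : ℕ} (bas : Module.Basis (Fin ℓ) A (Ω[A⁄k])) (i : Fin ℓ) (a : A) :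
    coordDer bas i a = bas.repr (KaehlerDifferential.D k A a) i := rfl

lemma sum_formula {ℓ : ℕ} (x : Fin ℓ → A) (bas : Module.Basis (Fin ℓ) A (Ω[A⁄k]))
    (hb : ∀ i, bas i = KaehlerDifferential.D k A (x i))
    (D' : Derivation k A A) (a : A) :
    D' a = ∑ i, coordDer bas i a * D' (x i) := by
  calc D' a = D'.liftKaehlerDifferential (KaehlerDifferential.D k A a) :=
        (D'.liftKaehlerDifferential_comp_D a).symm
    _ = D'.liftKaehlerDifferential (∑ i, bas.repr (KaehlerDifferential.D k A a) i • bas i) := by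
        rw [bas.sum_repr]
    _ = ∑ i, bas.repr (KaehlerDifferential.D k A a) i • D'.liftKaehlerDifferential (bas i) := by
        rw [map_sum]
        exact Finset.sum_congr rfl fun i _ => by rw [map_smul]
    _ = ∑ i, coordDer bas i a * D' (x i) := by
        refine Finset.sum_congr rfl fun i _ => ?_
        rw [hb i, D'.liftKaehlerDifferential_comp_D, smul_eq_mul, coordDer_apply]

end Aux

/-- With `A` a Poisson algebra over a field `k` of characteristic 0 whose Kähler
differentials are free with basis `(dx_1, …, dx_ℓ)` and trace map `tr`, the operation
`{m, a}_ω = −{a, m} + m·tr(a)` makes `A` into a right Poisson module over `A`: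
(i) `{m, ab}_ω = a·{m, b}_ω + b·{m, a}_ω`;
(ii) `{a·m, b}_ω = a·{m, b}_ω + m·{a, b}`;
(iii) `{{m, a}_ω, b}_ω − {{m, b}_ω, a}_ω = {m, {a, b}}_ω`. -/
theorem dualizing_module_right_poisson_structure
    (k A : Type) [Field k] [CharZero k] [CommRing A] [Algebra k A]
    (bracket : A →ₗ[k] A →ₗ[k] A)
    (alt : ∀ a : A, bracket a a = 0)
    (jacobi : ∀ a b c : A,
      bracket a (bracket b c) = bracket (bracket a b) c + bracket b (bracket a c))
    (leibniz : ∀ a b c : A, bracket a (b * c) = bracket a b * c + b * bracket a c)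
    (ℓ : ℕ) (x : Fin ℓ → A) (bas : Module.Basis (Fin ℓ) A (Ω[A⁄k]))
    (hb : ∀ i, bas i = KaehlerDifferential.D k A (x i))
    (tr : A → A)
    (htr : ∀ y : A, tr y = ∑ i, bas.repr (KaehlerDifferential.D k A (bracket y (x i))) i)
    (bw : A → A → A)
    (hbw : ∀ m a : A, bw m a = -(bracket a m) + m * tr a) :
    (∀ m a b : A, bw m (a * b) = a * bw m b + b * bw m a) ∧
    (∀ m a b : A, bw (a * m) b = a * bw m b + m * bracket a b) ∧
    (∀ m a b : A, bw (bw m a) b - bw (bw m b) a = bw m (bracket a b)) := by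
  classical
  set pd : Fin ℓ → Derivation k A A := fun i => coordDer bas i with hpddef
  -- antisymmetry
  have antisym : ∀ a b : A, bracket a b = -bracket b a := by
    intro a b
    have h := alt (a + b)
    simp only [map_add, LinearMap.add_apply, alt, zero_add, add_zero] at h
    linear_combination h
  -- sum formula
  have hsum : ∀ (D' : Derivation k A A) (a : A), D' a = ∑ i, pd i a * D' (x i) :=
    fun D' a => sum_formula x bas hb D' a
  -- bracket in coordinates
  have hbr : ∀ a b : A, bracket a b = ∑ i, pd i b * bracket a (x i) :=
    fun a b => hsum (pDer bracket leibniz a) b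
  -- pd of coordinates
  have hx : ∀ i j, pd i (x j) = if j = i then 1 else 0 := by
    intro i j
    show (bas.repr (KaehlerDifferential.D k A (x j))) i = _
    rw [← hb j, bas.repr_self]
    exact Finsupp.single_apply
  -- commuting partials
  have hcomm : ∀ (i j : Fin ℓ) (a : A), pd i (pd j a) = pd j (pd i a) := by
    intro i j a
    have h := hsum ⁅pd i, pd j⁆ a
    simp only [Derivation.commutator_apply, hx, apply_ite, Derivation.map_one_eq_zero,
      map_zero, sub_self, ite_self, mul_zero, Finset.sum_const_zero] at h
    linear_combination h
  -- trace via partials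
  have htr' : ∀ y : A, tr y = ∑ i, pd i (bracket y (x i)) := fun y => htr y
  -- trace is a derivation
  have htrmul : ∀ a b : A, tr (a * b) = a * tr b + b * tr a := by
    intro a b
    rw [htr' (a * b)]
    have step : ∑ i, pd i (bracket (a * b) (x i)) =
        b * (∑ i, pd i (bracket a (x i))) + (∑ i, pd i b * bracket a (x i)) +
          (a * (∑ i, pd i (bracket b (x i))) + (∑ i, pd i a * bracket b (x i))) := by
      rw [Finset.mul_sum, Finset.mul_sum, ← Finset.sum_add_distrib, ← Finset.sum_add_distrib,
        ← Finset.sum_add_distrib]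
      refine Finset.sum_congr rfl fun i _ => ?_
      have e : bracket (a * b) (x i) = b * bracket a (x i) + a * bracket b (x i) := by
        rw [antisym (a * b) (x i), leibniz, antisym a (x i), antisym b (x i)]; ring
      rw [e, map_add, Derivation.leibniz, Derivation.leibniz]
      simp only [smul_eq_mul]; ring
    rw [step, ← htr' a, ← htr' b, ← hbr a b, ← hbr b a]
    linear_combination antisym a b
  -- key double-sum expansion
  have key : ∀ c d : A, ∑ i, pd i (bracket c (bracket d (x i))) =
      (∑ i, ∑ j, pd j (bracket d (x i)) * pd i (bracket c (x j))) + bracket c (tr d) := by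
    intro c d
    have per : ∀ i, pd i (bracket c (bracket d (x i))) =
        ∑ j, (pd j (bracket d (x i)) * pd i (bracket c (x j)) +
          bracket c (x j) * pd i (pd j (bracket d (x i)))) := by
      intro i
      rw [hbr c (bracket d (x i)), map_sum]
      refine Finset.sum_congr rfl fun j _ => ?_
      rw [Derivation.leibniz]
      simp only [smul_eq_mul]
    calc ∑ i, pd i (bracket c (bracket d (x i)))
        = ∑ i, ∑ j, (pd j (bracket d (x i)) * pd i (bracket c (x j)) +
            bracket c (x j) * pd i (pd j (bracket d (x i)))) :=
          Finset.sum_congr rfl fun i _ => per i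
      _ = (∑ i, ∑ j, pd j (bracket d (x i)) * pd i (bracket c (x j))) +
            ∑ i, ∑ j, bracket c (x j) * pd i (pd j (bracket d (x i))) := by
          rw [← Finset.sum_add_distrib]
          exact Finset.sum_congr rfl fun i _ => Finset.sum_add_distrib
      _ = (∑ i, ∑ j, pd j (bracket d (x i)) * pd i (bracket c (x j))) + bracket c (tr d) := by
          congr 1
          rw [hbr c (tr d), Finset.sum_comm]
          refine Finset.sum_congr rfl fun j _ => ?_
          have e : pd j (tr d) = ∑ i, pd i (pd j (bracket d (x i))) := by
            rw [htr' d, map_sum]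
            exact Finset.sum_congr rfl fun i _ => hcomm j i _
          rw [e, Finset.sum_mul]
          exact Finset.sum_congr rfl fun i _ => mul_comm _ _
  -- trace of a bracket
  have htrbr : ∀ a b : A, tr (bracket a b) = bracket a (tr b) - bracket b (tr a) := by
    intro a b
    rw [htr' (bracket a b)]
    have per : ∀ i, pd i (bracket (bracket a b) (x i)) =
        pd i (bracket a (bracket b (x i))) - pd i (bracket b (bracket a (x i))) := by
      intro i
      have e : bracket (bracket a b) (x i) =
          bracket a (bracket b (x i)) - bracket b (bracket a (x i)) := by
        linear_combination (-1 : A) * jacobi a b (x i)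
      rw [e, map_sub]
    rw [Finset.sum_congr rfl fun i _ => per i, Finset.sum_sub_distrib, key a b, key b a]
    have cross : (∑ i, ∑ j, pd j (bracket b (x i)) * pd i (bracket a (x j))) =
        ∑ i, ∑ j, pd j (bracket a (x i)) * pd i (bracket b (x j)) := by
      rw [Finset.sum_comm]
      exact Finset.sum_congr rfl fun j _ => Finset.sum_congr rfl fun i _ => mul_comm _ _
    rw [cross]; ring
  refine ⟨?_, ?_, ?_⟩
  · intro m a b
    rw [hbw, hbw, hbw, htrmul]
    have e : bracket (a * b) m = a * bracket b m + b * bracket a m := by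
      rw [antisym (a * b) m, leibniz, antisym a m, antisym b m]; ring
    rw [e]; ring
  · intro m a b
    rw [hbw, hbw, leibniz, antisym b a]; ring
  · intro m a b
    have e1 : ∀ u v : A, bracket v (bw m u) =
        -(bracket v (bracket u m)) + (bracket v m * tr u + m * bracket v (tr u)) := by
      intro u v
      rw [hbw, map_add, map_neg, leibniz]
    rw [hbw (bw m a) b, hbw (bw m b) a, hbw m (bracket a b), e1, e1, hbw m a, hbw m b, htrbr a b]
    linear_combination (-1 : A) * jacobi a b m
end

section
/- Let k be a field of characteristic 0, A = k[x_1, x_2, x_3], φ ∈ A, and equip A with the Jacobian Poisson bracket {f, g}_φ = det M(f,g,φ). Then with respect to the standard basis (dx_1, dx_2, dx_3) of Ω_{A/k}, the trace map vanishes identically: tr(y) = 0 for all y ∈ A. In particular tr(x_i) = 0 for i = 1, 2, 3, i.e. every Jacobian (potential) Poisson structure on k[x_1, x_2, x_3] is unimodular. -/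
open MvPolynomial

lemma pderiv_comm' {k : Type} [CommSemiring k] {σ : Type} [DecidableEq σ]
    (i j : σ) (f : MvPolynomial σ k) :
    pderiv i (pderiv j f) = pderiv j (pderiv i f) := by
  induction f using MvPolynomial.induction_on' with
  | monomial s a =>
      rcases eq_or_ne i j with rfl | hij
      · rfl
      · simp only [pderiv_monomial]
        have h1 : ((s - Finsupp.single j 1 : (σ →₀ ℕ))) i = s i := by
          simp [Finsupp.tsub_apply, Finsupp.single_apply, Ne.symm hij]
        have h2 : ((s - Finsupp.single i 1 : (σ →₀ ℕ))) j = s j := by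
          simp [Finsupp.tsub_apply, Finsupp.single_apply, hij]
        rw [h1, h2, tsub_right_comm]
        ring_nf
  | add p q hp hq => simp [hp, hq]

lemma repr_D_eq_pderiv (k : Type) [Field k]
    (b : Module.Basis (Fin 3) (MvPolynomial (Fin 3) k) (Ω[MvPolynomial (Fin 3) k⁄k]))
    (hb : ∀ i, b i = KaehlerDifferential.D k (MvPolynomial (Fin 3) k) (X i))
    (i : Fin 3) (f : MvPolynomial (Fin 3) k) :
    b.repr (KaehlerDifferential.D k (MvPolynomial (Fin 3) k) f) i = pderiv i f := by
  have key : (b.coord i).compDer (KaehlerDifferential.D k (MvPolynomial (Fin 3) k))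
      = pderiv i := by
    apply MvPolynomial.derivation_ext
    intro j
    show b.coord i (KaehlerDifferential.D k (MvPolynomial (Fin 3) k) (X j)) = _
    rw [← hb j, pderiv_X, Module.Basis.coord_apply, b.repr_self]
    simp [Finsupp.single_apply, Pi.single_apply, eq_comm]
  have := congrArg (fun D => D f) (congrArg DFunLike.coe key)
  simpa [Module.Basis.coord] using this

/-- For `A = k[x_1, x_2, x_3]` with the Jacobian Poisson bracket
`{f, g}_φ = det M(f, g, φ)` attached to a potential `φ`, the trace map with respect to the
standard basis `(dx_1, dx_2, dx_3)` of `Ω[A⁄k]` vanishes identically: `tr(y) = 0` for all `y`.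
In particular `tr(x_i) = 0` for `i = 1, 2, 3`, i.e. every Jacobian Poisson structure on
`k[x_1, x_2, x_3]` is unimodular. -/
theorem jacobian_poisson_unimodular
    (k : Type) [Field k] [CharZero k] (φ : MvPolynomial (Fin 3) k)
    (br : MvPolynomial (Fin 3) k → MvPolynomial (Fin 3) k → MvPolynomial (Fin 3) k)
    (hbr : ∀ f g, br f g = Matrix.det
      !![pderiv 0 f, pderiv 1 f, pderiv 2 f;
         pderiv 0 g, pderiv 1 g, pderiv 2 g;
         pderiv 0 φ, pderiv 1 φ, pderiv 2 φ])
    (b : Module.Basis (Fin 3) (MvPolynomial (Fin 3) k) (Ω[MvPolynomial (Fin 3) k⁄k]))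
    (hb : ∀ i, b i = KaehlerDifferential.D k (MvPolynomial (Fin 3) k) (X i))
    (tr : MvPolynomial (Fin 3) k → MvPolynomial (Fin 3) k)
    (htr : ∀ y, tr y =
      ∑ i, b.repr (KaehlerDifferential.D k (MvPolynomial (Fin 3) k) (br y (X i))) i) :
    (∀ y, tr y = 0) ∧ (∀ i : Fin 3, tr (X i) = 0) := by
  have main : ∀ y, tr y = 0 := by
    intro y
    rw [htr y]
    have hrepr : ∀ (i : Fin 3), b.repr
        (KaehlerDifferential.D k (MvPolynomial (Fin 3) k) (br y (X i))) i
        = pderiv i (br y (X i)) := fun i => repr_D_eq_pderiv k b hb i _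
    calc ∑ i, b.repr (KaehlerDifferential.D k (MvPolynomial (Fin 3) k) (br y (X i))) i
        = ∑ i : Fin 3, pderiv i (br y (X i)) := by
          exact Finset.sum_congr rfl fun i _ => hrepr i
      _ = 0 := by
          simp only [hbr]
          have pc := fun (i j : Fin 3) (f : MvPolynomial (Fin 3) k) => pderiv_comm' i j f
          simp [Matrix.det_fin_three, Fin.sum_univ_three, pderiv_X, Pi.single_apply]
          rw [pc 1 0 y, pc 2 0 y, pc 2 1 y, pc 1 0 φ, pc 2 0 φ, pc 2 1 φ]
          ring
  exact ⟨main, fun i => main (X i)⟩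
end
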